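/- Let q > 2 be a natural number and let r be an integer with 0 < r < 2q and gcd(r, 2q) = 1. Among all quadruples (a,b,c,d) of integers with 0 ≤ a,b,c,d ≤ 2q−1, the number of quadruples satisfying both a − b − c + d ≡ 0 (mod 2q) and ⌊((ra) mod 2q)/2⌋ − ⌊((rb) mod 2q)/2⌋ − ⌊((rc) mod 2q)/2⌋ + ⌊((rd) mod 2q)/2⌋ ≡ 0 (mod q) equals 6q³. Consequently, a uniformly random exponent chain that forms a cycle for circulant size 2q forms a cycle after floor scale modulo lifting with scale r with probability 3/4. -/

import Mathlib

/-- The finite set of exponent chains of length 4 for circulant size `2q`: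
quadruples `(a,b,c,d)` of integers with `0 ≤ a,b,c,d ≤ 2q-1`. -/
noncomputable abbrev expChains (q : ℕ) : Finset (ℤ × ℤ × ℤ × ℤ) :=
  Finset.Icc (0:ℤ) (2 * q - 1) ×ˢ Finset.Icc (0:ℤ) (2 * q - 1) ×ˢ
    Finset.Icc (0:ℤ) (2 * q - 1) ×ˢ Finset.Icc (0:ℤ) (2 * q - 1)

/-- The chain forms a cycle for circulant size `2q`. -/
abbrev isCycle (q : ℕ) (x : ℤ × ℤ × ℤ × ℤ) : Prop :=
  (x.1 - x.2.1 - x.2.2.1 + x.2.2.2) % (2 * q) = 0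

/-- The floor-scale-modulo lift of entry `e` to circulant size `q` with scale `r`:
`⌊((r·e) mod 2q)/2⌋`. -/
def fsmLift (q : ℕ) (r e : ℤ) : ℤ := (r * e % (2 * q)) / 2

/-- The floor-scale-modulo-lifted chain with scale `r` forms a cycle for circulant size `q`. -/
abbrev isFsmCycle (q : ℕ) (r : ℤ) (x : ℤ × ℤ × ℤ × ℤ) : Prop :=
  (fsmLift q r x.1 - fsmLift q r x.2.1 - fsmLift q r x.2.2.1 + fsmLift q r x.2.2.2) % q = 0

private lemma emod_self_mod (n a : ℤ) : a % n ≡ a [ZMOD n] :=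
  Int.emod_emod_of_dvd a dvd_rfl

private lemma eq_of_modEq' {n a b : ℤ} (h : a ≡ b [ZMOD n]) (h0 : 0 ≤ a) (h1 : a < n) :
    b % n = a := by
  have : b % n = a % n := h.symm
  rw [this, Int.emod_eq_of_lt h0 h1]

private lemma card_I {n : ℤ} (hn : 0 ≤ n) : (Finset.Icc (0:ℤ) (n-1)).card = n.toNat := by
  rw [Int.card_Icc]; omega

def isHalf (q : ℕ) (x : ℤ × ℤ × ℤ × ℤ) : Prop :=
  (x.1 / 2 - x.2.1 / 2 - x.2.2.1 / 2 + x.2.2.2 / 2) % q = 0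

instance (q : ℕ) : DecidablePred (isHalf q) := fun _ => by unfold isHalf; infer_instance

private def Pset : Finset (ℤ × ℤ × ℤ × ℤ) :=
  (({0,1} : Finset ℤ) ×ˢ ({0,1} : Finset ℤ) ×ˢ ({0,1} : Finset ℤ) ×ˢ ({0,1} : Finset ℤ)).filter
    (fun p => p.1 - p.2.1 - p.2.2.1 + p.2.2.2 = 0)

private lemma Pset_card : Pset.card = 6 := by decide

private lemma mem_Pset {p1 p2 p3 p4 : ℤ} :
    ((p1, p2, p3, p4) : ℤ × ℤ × ℤ × ℤ) ∈ Pset ↔ ((0 ≤ p1 ∧ p1 ≤ 1) ∧ (0 ≤ p2 ∧ p2 ≤ 1)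
      ∧ (0 ≤ p3 ∧ p3 ≤ 1) ∧ (0 ≤ p4 ∧ p4 ≤ 1)) ∧ p1 - p2 - p3 + p4 = 0 := by
  simp only [Pset, Finset.mem_filter, Finset.mem_product, Finset.mem_insert,
    Finset.mem_singleton]
  constructor
  · rintro ⟨⟨h1, h2, h3, h4⟩, h5⟩; exact ⟨⟨by omega, by omega, by omega, by omega⟩, h5⟩
  · rintro ⟨⟨h1, h2, h3, h4⟩, h5⟩; exact ⟨⟨by omega, by omega, by omega, by omega⟩, h5⟩

/-- Count of cycles that stay cycles after halving: `6q³`. -/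
lemma count_joint (q : ℕ) (hq : 2 < q) :
    ((expChains q).filter (fun x => isCycle q x ∧ isHalf q x)).card = 6 * q ^ 3 := by
  classical
  have hq0 : (0:ℤ) < q := by exact_mod_cast Nat.zero_lt_of_lt hq
  rw [Finset.card_nbij'
      (fun x => ((x.1 % 2, x.2.1 % 2, x.2.2.1 % 2, x.2.2.2 % 2), (x.2.1 / 2, x.2.2.1 / 2, x.2.2.2 / 2)))
      (fun y => (2 * ((y.2.1 + y.2.2.1 - y.2.2.2) % q) + y.1.1,
                 2 * y.2.1 + y.1.2.1, 2 * y.2.2.1 + y.1.2.2.1, 2 * y.2.2.2 + y.1.2.2.2))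
      (t := Pset ×ˢ (Finset.Icc (0:ℤ) (q - 1) ×ˢ Finset.Icc (0:ℤ) (q - 1) ×ˢ
        Finset.Icc (0:ℤ) (q - 1)))]
  · rw [Finset.card_product, Finset.card_product, Finset.card_product, Pset_card,
      card_I (by omega), Int.toNat_natCast]
    ring
  · -- forward membership
    intro x hx; rcases x with ⟨a, b, c, d⟩
    simp only [Finset.mem_coe, Finset.mem_filter, Finset.mem_product, Finset.mem_Icc] at hx
    obtain ⟨⟨ha, hb, hc, hd⟩, hcyc, hhalf⟩ := hx
    simp only [Finset.mem_coe, Finset.mem_product, Finset.mem_Icc]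
    have hs : a % 2 - b % 2 - c % 2 + d % 2 = 0 := by
      have hH : (q:ℤ) ∣ (a / 2 - b / 2 - c / 2 + d / 2) := Int.dvd_of_emod_eq_zero hhalf
      have hC : (2 * (q:ℤ)) ∣ (a - b - c + d) := Int.dvd_of_emod_eq_zero hcyc
      have hdvd : (2 * (q:ℤ)) ∣ (a % 2 - b % 2 - c % 2 + d % 2) := by
        obtain ⟨k, hk⟩ := hH
        obtain ⟨l, hl⟩ := hC
        refine ⟨l - k, ?_⟩
        have e1 : a = 2 * (a / 2) + a % 2 := by omega
        have e2 : b = 2 * (b / 2) + b % 2 := by omega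
        have e3 : c = 2 * (c / 2) + c % 2 := by omega
        have e4 : d = 2 * (d / 2) + d % 2 := by omega
        nlinarith [hk, hl, e1, e2, e3, e4]
      have habs : |a % 2 - b % 2 - c % 2 + d % 2| < 2 * (q:ℤ) := by
        have := Int.emod_nonneg a (two_ne_zero)
        rw [abs_lt]; omega
      exact Int.eq_zero_of_abs_lt_dvd hdvd habs
    refine ⟨mem_Pset.mpr ⟨⟨by omega, by omega, by omega, by omega⟩, hs⟩,
      ⟨by omega, by omega⟩, ⟨by omega, by omega⟩, by omega, by omega⟩
  · -- backward membership
    intro x hy; rcases x with ⟨⟨p1, p2, p3, p4⟩, t1, t2, t3⟩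
    simp only [Finset.mem_coe, Finset.mem_product, Finset.mem_Icc] at hy
    obtain ⟨hp, ⟨ht1, ht2, ht3⟩⟩ := hy
    obtain ⟨⟨hp1, hp2, hp3, hp4⟩, hsum⟩ := mem_Pset.mp hp
    set m : ℤ := (t1 + t2 - t3) % q with hm
    have hm0 : 0 ≤ m := Int.emod_nonneg _ (by omega)
    have hm1 : m < q := Int.emod_lt_of_pos _ hq0
    have hMdvd : (q:ℤ) ∣ (m - t1 - t2 + t3) := by
      have h1 : m ≡ t1 + t2 - t3 [ZMOD (q:ℤ)] := emod_self_mod _ _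
      have := h1.dvd
      have heq : t1 + t2 - t3 - m = -(m - t1 - t2 + t3) := by ring
      rw [heq] at this
      exact dvd_neg.mp this
    obtain ⟨k, hk⟩ := hMdvd
    simp only [Finset.mem_coe, Finset.mem_filter, Finset.mem_product, Finset.mem_Icc]
    refine ⟨⟨⟨by omega, by omega⟩, ⟨by omega, by omega⟩, ⟨by omega, by omega⟩, by omega, by omega⟩,
      ?_, ?_⟩
    · show (2 * m + p1 - (2 * t1 + p2) - (2 * t2 + p3) + (2 * t3 + p4)) % (2 * (q:ℤ)) = 0
      apply Int.emod_eq_zero_of_dvd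
      exact ⟨k, by linarith [hk, hsum]⟩
    · show ((2 * m + p1) / 2 - (2 * t1 + p2) / 2 - (2 * t2 + p3) / 2 + (2 * t3 + p4) / 2)
        % (q:ℤ) = 0
      have e1 : (2 * m + p1) / 2 = m := by omega
      have e2 : (2 * t1 + p2) / 2 = t1 := by omega
      have e3 : (2 * t2 + p3) / 2 = t2 := by omega
      have e4 : (2 * t3 + p4) / 2 = t3 := by omega
      rw [e1, e2, e3, e4, hk, Int.mul_emod_right]
  · -- left inverse
    intro x hx; rcases x with ⟨a, b, c, d⟩
    simp only [Finset.mem_coe, Finset.mem_filter, Finset.mem_product, Finset.mem_Icc] at hx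
    obtain ⟨⟨ha, hb, hc, hd⟩, hcyc, hhalf⟩ := hx
    have hmod : a / 2 ≡ b / 2 + c / 2 - d / 2 [ZMOD (q:ℤ)] := by
      rw [Int.modEq_iff_dvd]
      have hH : (q:ℤ) ∣ (a / 2 - b / 2 - c / 2 + d / 2) := Int.dvd_of_emod_eq_zero hhalf
      have heq : b / 2 + c / 2 - d / 2 - a / 2 = -(a / 2 - b / 2 - c / 2 + d / 2) := by ring
      rw [heq]; exact dvd_neg.mpr hH
    have hkey : (b / 2 + c / 2 - d / 2) % (q:ℤ) = a / 2 :=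
      eq_of_modEq' hmod (by omega) (by omega)
    simp only [Prod.mk.injEq]
    refine ⟨by rw [hkey]; omega, by omega, by omega, by omega⟩
  · -- right inverse
    intro x hy; rcases x with ⟨⟨p1, p2, p3, p4⟩, t1, t2, t3⟩
    simp only [Finset.mem_coe, Finset.mem_product, Finset.mem_Icc] at hy
    obtain ⟨hp, ⟨ht1, ht2, ht3⟩⟩ := hy
    obtain ⟨⟨hp1, hp2, hp3, hp4⟩, hsum⟩ := mem_Pset.mp hp
    have hm0 : 0 ≤ (t1 + t2 - t3) % (q:ℤ) := Int.emod_nonneg _ (by omega)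
    simp only [Prod.mk.injEq]
    refine ⟨⟨by omega, by omega, by omega, by omega⟩, by omega, by omega, by omega⟩

private lemma alt_emod (n a b c d : ℤ) :
    (a % n - b % n - c % n + d % n) % n = (a - b - c + d) % n :=
  (((emod_self_mod n a).sub (emod_self_mod n b)).sub (emod_self_mod n c)).add
    (emod_self_mod n d)

lemma count_cycle (q : ℕ) (hq : 0 < q) :
    ((expChains q).filter (fun x => isCycle q x)).card = 8 * q ^ 3 := by
  classical
  have h2q : (0:ℤ) < 2 * q := by positivity
  rw [Finset.card_nbij' (fun x => (x.2.1, x.2.2.1, x.2.2.2))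
      (fun y => ((y.1 + y.2.1 - y.2.2) % (2 * (q:ℤ)), y.1, y.2.1, y.2.2))
      (t := Finset.Icc (0:ℤ) (2 * q - 1) ×ˢ Finset.Icc (0:ℤ) (2 * q - 1) ×ˢ
        Finset.Icc (0:ℤ) (2 * q - 1))]
  · rw [Finset.card_product, Finset.card_product, card_I (by positivity)]
    have : ((2:ℤ) * q).toNat = 2 * q := by omega
    rw [this]; ring
  · intro x hx; rcases x with ⟨a, b, c, d⟩
    simp only [Finset.mem_coe, Finset.mem_filter, Finset.mem_product, Finset.mem_Icc] at hx ⊢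
    exact ⟨hx.1.2.1, hx.1.2.2.1, hx.1.2.2.2⟩
  · intro x hy; rcases x with ⟨b, c, d⟩
    simp only [Finset.mem_coe, Finset.mem_product, Finset.mem_Icc] at hy
    simp only [Finset.mem_coe, Finset.mem_filter, Finset.mem_product, Finset.mem_Icc]
    have hmem : 0 ≤ (b + c - d) % (2 * (q:ℤ)) ∧ (b + c - d) % (2 * (q:ℤ)) < 2 * q :=
      ⟨Int.emod_nonneg _ (by omega), Int.emod_lt_of_pos _ h2q⟩
    refine ⟨⟨⟨by omega, by omega⟩, hy.1, hy.2.1, hy.2.2⟩, ?_⟩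
    show ((b + c - d) % (2 * (q:ℤ)) - b - c + d) % (2 * (q:ℤ)) = 0
    have h1 : (b + c - d) % (2 * (q:ℤ)) ≡ b + c - d [ZMOD 2 * (q:ℤ)] := emod_self_mod _ _
    have h2 : (2 * (q:ℤ)) ∣ ((b + c - d) % (2 * (q:ℤ)) - b - c + d) := by
      have := (Int.ModEq.dvd h1)
      have heq : b + c - d - (b + c - d) % (2 * (q:ℤ))
          = -((b + c - d) % (2 * (q:ℤ)) - b - c + d) := by ring
      rw [heq] at this
      exact (dvd_neg.mp this)
    exact Int.emod_eq_zero_of_dvd h2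
  · intro x hx; rcases x with ⟨a, b, c, d⟩
    simp only [Finset.mem_coe, Finset.mem_filter, Finset.mem_product, Finset.mem_Icc] at hx
    obtain ⟨⟨ha, hb, hc, hd⟩, hcyc⟩ := hx
    have hdvd : (2 * (q:ℤ)) ∣ (a - b - c + d) := Int.dvd_of_emod_eq_zero hcyc
    have hmod : a ≡ b + c - d [ZMOD 2 * (q:ℤ)] := by
      rw [Int.modEq_iff_dvd]
      have heq : b + c - d - a = -(a - b - c + d) := by ring
      rw [heq]; exact dvd_neg.mpr hdvd
    have : (b + c - d) % (2 * (q:ℤ)) = a := eq_of_modEq' hmod ha.1 (by omega)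
    simp [this]
  · rintro ⟨b, c, d⟩ _
    rfl

/-- scaling a cycle by any integer gives a cycle -/
private lemma cycle_scale {q : ℕ} {a b c d : ℤ} (w : ℤ)
    (h : (a - b - c + d) % (2 * (q:ℤ)) = 0) :
    (w * a % (2 * (q:ℤ)) - w * b % (2 * (q:ℤ)) - w * c % (2 * (q:ℤ)) + w * d % (2 * (q:ℤ)))
      % (2 * (q:ℤ)) = 0 := by
  rw [alt_emod]
  have : w * a - w * b - w * c + w * d = w * (a - b - c + d) := by ring
  rw [this]
  exact Int.emod_eq_zero_of_dvd (Dvd.dvd.mul_left (Int.dvd_of_emod_eq_zero h) w)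

lemma count_transfer (q : ℕ) (hq : 0 < q) (r : ℤ) (hrcop : Int.gcd r (2 * q) = 1) :
    ((expChains q).filter (fun x => isCycle q x ∧ isFsmCycle q r x)).card
      = ((expChains q).filter (fun x => isCycle q x ∧ isHalf q x)).card := by
  classical
  have hq0 : (0:ℤ) < 2 * q := by exact_mod_cast (by omega : 0 < 2 * q)
  set n : ℤ := 2 * (q:ℤ) with hn
  obtain ⟨u, v, huv⟩ := Int.isCoprime_iff_gcd_eq_one.mpr hrcop
  -- r * u ≡ 1 [ZMOD n]
  have hru : r * u ≡ 1 [ZMOD n] := by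
    have : (1:ℤ) ≡ r * u [ZMOD n] := Int.modEq_iff_dvd.mpr ⟨-v, by linarith⟩
    exact this.symm
  have hur : u * r ≡ 1 [ZMOD n] := by rwa [mul_comm] at hru
  -- key cancellation
  have key : ∀ w z : ℤ, w * z ≡ 1 [ZMOD n] → ∀ a : ℤ, w * (z * a % n) % n = a % n := by
    intro w z hwz a
    calc w * (z * a % n) % n = w * (z * a) % n := (emod_self_mod n (z * a)).mul_left w
      _ = (w * z) * a % n := by ring_nf
      _ = 1 * a % n := hwz.mul_right a
      _ = a % n := by rw [one_mul]
  have memmap : ∀ w a : ℤ, a ∈ Finset.Icc (0:ℤ) (2 * q - 1) →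
      w * a % n ∈ Finset.Icc (0:ℤ) (2 * q - 1) := by
    intro w a _
    rw [Finset.mem_Icc]
    exact ⟨Int.emod_nonneg _ (by omega), by have := Int.emod_lt_of_pos (w * a) hq0; omega⟩
  have inrange : ∀ a : ℤ, a ∈ Finset.Icc (0:ℤ) (2 * q - 1) → a % n = a := by
    intro a ha
    rw [Finset.mem_Icc] at ha
    exact Int.emod_eq_of_lt ha.1 (by omega)
  rw [Finset.card_nbij'
      (fun x => (r * x.1 % n, r * x.2.1 % n, r * x.2.2.1 % n, r * x.2.2.2 % n))
      (fun y => (u * y.1 % n, u * y.2.1 % n, u * y.2.2.1 % n, u * y.2.2.2 % n))]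
  · -- forward membership
    intro x hx; rcases x with ⟨a, b, c, d⟩
    simp only [Finset.mem_coe, Finset.mem_filter, Finset.mem_product] at hx ⊢
    obtain ⟨⟨ha, hb, hc, hd⟩, hcyc, hfsm⟩ := hx
    exact ⟨⟨memmap r a ha, memmap r b hb, memmap r c hc, memmap r d hd⟩,
      cycle_scale r hcyc, hfsm⟩
  · -- backward membership
    intro x hy; rcases x with ⟨a, b, c, d⟩
    simp only [Finset.mem_coe, Finset.mem_filter, Finset.mem_product] at hy ⊢
    obtain ⟨⟨ha, hb, hc, hd⟩, hcyc, hhalf⟩ := hy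
    refine ⟨⟨memmap u a ha, memmap u b hb, memmap u c hc, memmap u d hd⟩,
      cycle_scale u hcyc, ?_⟩
    show (fsmLift q r (u * a % n) - fsmLift q r (u * b % n) - fsmLift q r (u * c % n)
      + fsmLift q r (u * d % n)) % (q:ℤ) = 0
    have hf : ∀ e : ℤ, e ∈ Finset.Icc (0:ℤ) (2 * q - 1) → fsmLift q r (u * e % n) = e / 2 := by
      intro e he
      show (r * (u * e % n) % (2 * (q:ℤ))) / 2 = e / 2
      rw [show ((2:ℤ) * q) = n from rfl, key r u hru e, inrange e he]
    rw [hf a ha, hf b hb, hf c hc, hf d hd]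
    exact hhalf
  · -- left inverse
    intro x hx; rcases x with ⟨a, b, c, d⟩
    simp only [Finset.mem_coe, Finset.mem_filter, Finset.mem_product] at hx
    obtain ⟨⟨ha, hb, hc, hd⟩, -⟩ := hx
    simp only [Prod.mk.injEq]
    refine ⟨?_, ?_, ?_, ?_⟩ <;>
      [skip; skip; skip; skip] <;>
      first
        | (rw [key u r hur a, inrange a ha])
        | (rw [key u r hur b, inrange b hb])
        | (rw [key u r hur c, inrange c hc])
        | (rw [key u r hur d, inrange d hd])
  · -- right inverse
    intro x hy; rcases x with ⟨a, b, c, d⟩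
    simp only [Finset.mem_coe, Finset.mem_filter, Finset.mem_product] at hy
    obtain ⟨⟨ha, hb, hc, hd⟩, -⟩ := hy
    simp only [Prod.mk.injEq]
    exact ⟨by rw [key r u hru a, inrange a ha], by rw [key r u hru b, inrange b hb],
      by rw [key r u hru c, inrange c hc], by rw [key r u hru d, inrange d hd]⟩

/-- The number of exponent chains forming a cycle for circulant size `2q` whose
floor-scale-modulo lift with scale `r` (`0 < r < 2q`, `gcd(r,2q)=1`) forms a cycle for
circulant size `q` is `6q³`; hence a uniformly random chain forming a cycle stays a
cycle after floor scale modulo lifting with probability `3/4`. -/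
theorem stmt_9 (q : ℕ) (hq : 2 < q) (r : ℤ) (hr0 : 0 < r) (hr1 : r < 2 * q)
    (hrcop : Int.gcd r (2 * q) = 1) :
    ((expChains q).filter (fun x => isCycle q x ∧ isFsmCycle q r x)).card = 6 * q ^ 3 ∧
    (((expChains q).filter (fun x => isCycle q x ∧ isFsmCycle q r x)).card : ℚ) /
      (((expChains q).filter (fun x => isCycle q x)).card : ℚ) = 3 / 4 := by
  classical
  have hq0 : 0 < q := by omega
  have h6 : ((expChains q).filter (fun x => isCycle q x ∧ isFsmCycle q r x)).card = 6 * q ^ 3 := by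
    rw [count_transfer q hq0 r hrcop, count_joint q hq]
  refine ⟨h6, ?_⟩
  rw [h6, count_cycle q hq0]
  have hqQ : ((q : ℚ)) ≠ 0 := by exact_mod_cast hq0.ne'
  push_cast
  field_simp
  ring
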